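/- Let t₁ ∈ ℝ, let F, R : [0,∞) → ℝ be continuous with R satisfying the resolvent equation R(t) = F(t) + ∫₀ᵗ F(t−ξ) R(ξ) dξ for all t ≥ 0, and let j : ℝ → ℝ be bounded and measurable with j(t) = 0 for all t ≤ t₁. Then the function M defined by M(t) := j(t) + ∫_{t₁}^t R(t−ξ) j(ξ) dξ satisfies the Volterra integral equation M(t) = j(t) + ∫_{t₁}^t M(ξ) F(t−ξ) dξ for all t ≥ t₁. -/

import Mathlib

open MeasureTheory intervalIntegral

/-- **Renewal lemma** (the paper's Lemma `renewal`, Appendix A.1).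
If `R` satisfies the resolvent equation `R(t) = F(t) + ∫₀ᵗ F(t−ξ) R(ξ) dξ` on `[0,∞)`
and `j` is bounded and measurable with `j ≡ 0` on `(−∞, t₁]`, then
`M(t) := j(t) + ∫_{t₁}^t R(t−ξ) j(ξ) dξ` solves the Volterra equation
`M(t) = j(t) + ∫_{t₁}^t M(ξ) F(t−ξ) dξ` for all `t ≥ t₁`. -/
theorem renewal_lemma_forward
    (t₁ : ℝ) (F R : ℝ → ℝ)
    (hF : ContinuousOn F (Set.Ici 0))
    (hR : ContinuousOn R (Set.Ici 0))
    (hres : ∀ t ≥ (0 : ℝ), R t = F t + ∫ ξ in (0 : ℝ)..t, F (t - ξ) * R ξ)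
    (j : ℝ → ℝ) (hj_meas : Measurable j) (hj_bdd : ∃ C : ℝ, ∀ t, |j t| ≤ C)
    (hj0 : ∀ t ≤ t₁, j t = 0) :
    ∀ t ≥ t₁,
      (j t + ∫ ξ in t₁..t, R (t - ξ) * j ξ) =
        j t + ∫ ξ in t₁..t, (j ξ + ∫ η in t₁..ξ, R (ξ - η) * j η) * F (t - ξ) := by
  obtain ⟨C, hC⟩ := hj_bdd
  have hC0 : 0 ≤ C := (abs_nonneg _).trans (hC 0)
  intro b hab
  congr 1
  set a := t₁ with ha
  -- continuous extensions of F and R to all of ℝ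
  set F' : ℝ → ℝ := fun u => F (max u 0) with hF'def
  set R' : ℝ → ℝ := fun u => R (max u 0) with hR'def
  have hF'c : Continuous F' :=
    hF.comp_continuous (continuous_id.max continuous_const) fun x => le_max_right x 0
  have hR'c : Continuous R' :=
    hR.comp_continuous (continuous_id.max continuous_const) fun x => le_max_right x 0
  have hF'eq : ∀ u, 0 ≤ u → F' u = F u := fun u hu => by
    simp only [hF'def, max_eq_left hu]
  have hR'eq : ∀ u, 0 ≤ u → R' u = R u := fun u hu => by
    simp only [hR'def, max_eq_left hu]
  -- bounds on the compact set of relevant arguments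
  obtain ⟨CF, hCF⟩ := (isCompact_Icc (a := a - b) (b := b - a)).exists_bound_of_continuousOn
    hF'c.continuousOn
  obtain ⟨CR, hCR⟩ := (isCompact_Icc (a := a - b) (b := b - a)).exists_bound_of_continuousOn
    hR'c.continuousOn
  have h0mem : (0 : ℝ) ∈ Set.Icc (a - b) (b - a) := ⟨by linarith, by linarith⟩
  have hCF0 : 0 ≤ CF := (norm_nonneg _).trans (hCF 0 h0mem)
  have hCR0 : 0 ≤ CR := (norm_nonneg _).trans (hCR 0 h0mem)
  set s : Set ℝ := Set.Ioc a b with hs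
  have hsfin : volume s ≠ ⊤ := by simp [hs, Real.volume_Ioc]
  -- the two-variable kernel
  set f : ℝ → ℝ → ℝ := fun ξ η => if η ≤ ξ then F' (b - ξ) * (R' (ξ - η) * j η) else 0
    with hfdef
  have hfm : Measurable (Function.uncurry f) := by
    apply Measurable.ite (measurableSet_le measurable_snd measurable_fst)
    · exact ((hF'c.measurable.comp (measurable_const.sub measurable_fst)).mul
        ((hR'c.measurable.comp (measurable_fst.sub measurable_snd)).mul
          (hj_meas.comp measurable_snd)))
    · exact measurable_const
  -- integrability of the kernel on the square
  have hfint : Integrable (Function.uncurry f) ((volume.restrict s).prod (volume.restrict s)) := by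
    rw [Measure.prod_restrict]
    apply Measure.integrableOn_of_bounded (M := CF * (CR * C))
    · rw [Measure.prod_prod]
      exact ENNReal.mul_ne_top hsfin hsfin
    · exact hfm.aestronglyMeasurable
    · refine (ae_restrict_iff' (measurableSet_Ioc.prod measurableSet_Ioc)).2
        (Filter.Eventually.of_forall ?_)
      rintro ⟨ξ, η⟩ ⟨hξ, hη⟩
      simp only [Function.uncurry, hfdef]
      split_ifs with h
      · have h1 : b - ξ ∈ Set.Icc (a - b) (b - a) :=
          ⟨by simp only [hs, Set.mem_Ioc] at hξ; linarith [hξ.1, hξ.2],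
           by simp only [hs, Set.mem_Ioc] at hξ; linarith [hξ.1, hξ.2]⟩
        have h2 : ξ - η ∈ Set.Icc (a - b) (b - a) :=
          ⟨by simp only [hs, Set.mem_Ioc] at hξ hη; linarith [hξ.2, hη.1],
           by simp only [hs, Set.mem_Ioc] at hξ hη; linarith [hξ.1, hη.2]⟩
        calc ‖F' (b - ξ) * (R' (ξ - η) * j η)‖
            = ‖F' (b - ξ)‖ * (‖R' (ξ - η)‖ * ‖j η‖) := by
              simp [norm_mul]
          _ ≤ CF * (CR * C) := by
              gcongr
              · exact hCF _ h1
              · exact hCR _ h2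
              · exact hC η
      · simpa using mul_nonneg hCF0 (mul_nonneg hCR0 hC0)
  -- pointwise: the inner integral of the statement equals the slice integral of f
  have hslice : ∀ ξ ∈ s, (j ξ + ∫ η in a..ξ, R (ξ - η) * j η) * F (b - ξ)
      = j ξ * F' (b - ξ) + ∫ η in s, f ξ η := by
    intro ξ hξ
    obtain ⟨hξ1, hξ2⟩ := hξ
    have hFs : F (b - ξ) = F' (b - ξ) := (hF'eq _ (by linarith)).symm
    have hinner : (∫ η in a..ξ, R (ξ - η) * j η) * F' (b - ξ) = ∫ η in s, f ξ η := by
      have hsplit : s = Set.Ioc a ξ ∪ Set.Ioc ξ b := (Set.Ioc_union_Ioc_eq_Ioc hξ1.le hξ2).symm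
      have hint1 : IntegrableOn (f ξ) (Set.Ioc a ξ) volume := by
        apply Measure.integrableOn_of_bounded (M := CF * (CR * C))
        · simp [Real.volume_Ioc]
        · exact (hfm.comp (measurable_const.prodMk measurable_id)).aestronglyMeasurable
        · refine (ae_restrict_iff' measurableSet_Ioc).2 (Filter.Eventually.of_forall ?_)
          intro η hη
          simp only [hfdef]
          split_ifs with h
          · have h1 : b - ξ ∈ Set.Icc (a - b) (b - a) := ⟨by linarith, by linarith⟩
            have h2 : ξ - η ∈ Set.Icc (a - b) (b - a) :=
              ⟨by linarith [hη.1, hη.2], by linarith [hη.1, hη.2]⟩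
            calc ‖F' (b - ξ) * (R' (ξ - η) * j η)‖
                = ‖F' (b - ξ)‖ * (‖R' (ξ - η)‖ * ‖j η‖) := by simp [norm_mul]
              _ ≤ CF * (CR * C) := by
                  gcongr
                  · exact hCF _ h1
                  · exact hCR _ h2
                  · exact hC η
          · simpa using mul_nonneg hCF0 (mul_nonneg hCR0 hC0)
      have hzero : ∫ η in Set.Ioc ξ b, f ξ η = 0 := by
        apply setIntegral_eq_zero_of_forall_eq_zero
        intro η hη
        simp only [hfdef, if_neg (not_le.2 hη.1)]
      rw [hsplit, setIntegral_union (Set.Ioc_disjoint_Ioc_of_le le_rfl) measurableSet_Ioc hint1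
        (by
          apply Measure.integrableOn_of_bounded (M := 0)
          · simp [Real.volume_Ioc]
          · exact (hfm.comp (measurable_const.prodMk measurable_id)).aestronglyMeasurable
          · refine (ae_restrict_iff' measurableSet_Ioc).2 (Filter.Eventually.of_forall ?_)
            intro η hη
            simp [hfdef, if_neg (not_le.2 hη.1)]), hzero, add_zero]
      rw [intervalIntegral.integral_of_le hξ1.le]
      rw [mul_comm, ← MeasureTheory.integral_const_mul]
      apply setIntegral_congr_fun measurableSet_Ioc
      intro η hη
      simp only [hfdef, if_pos hη.2]
      rw [hR'eq _ (by linarith [hη.2])]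
    rw [hFs, add_mul, hinner]
  -- now compute
  rw [intervalIntegral.integral_of_le hab, intervalIntegral.integral_of_le hab]
  symm
  calc ∫ ξ in s, (j ξ + ∫ η in a..ξ, R (ξ - η) * j η) * F (b - ξ)
      = ∫ ξ in s, (j ξ * F' (b - ξ) + ∫ η in s, f ξ η) :=
        setIntegral_congr_fun measurableSet_Ioc hslice
    _ = (∫ ξ in s, j ξ * F' (b - ξ)) + ∫ ξ in s, ∫ η in s, f ξ η := by
        apply MeasureTheory.integral_add
        · apply Measure.integrableOn_of_bounded (M := C * CF) hsfin
          · exact (hj_meas.mul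
              (hF'c.measurable.comp (measurable_const.sub measurable_id))).aestronglyMeasurable
          · refine (ae_restrict_iff' measurableSet_Ioc).2 (Filter.Eventually.of_forall ?_)
            intro ξ hξ
            have h1 : b - ξ ∈ Set.Icc (a - b) (b - a) :=
              ⟨by linarith [hξ.1, hξ.2], by linarith [hξ.1, hξ.2]⟩
            calc ‖j ξ * F' (b - ξ)‖ = ‖j ξ‖ * ‖F' (b - ξ)‖ := norm_mul _ _
              _ ≤ C * CF := by
                  gcongr
                  · exact hC ξ
                  · exact hCF _ h1
        · exact hfint.integral_prod_left
    _ = (∫ ξ in s, j ξ * F' (b - ξ)) + ∫ η in s, ∫ ξ in s, f ξ η := by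
        rw [integral_integral_swap hfint]
    _ = (∫ ξ in s, j ξ * F' (b - ξ)) + ∫ η in s, j η * (R' (b - η) - F' (b - η)) := by
        congr 1
        apply setIntegral_congr_fun measurableSet_Ioc
        intro η hη
        show (∫ ξ in s, f ξ η) = j η * (R' (b - η) - F' (b - η))
        -- inner integral in ξ over s
        have hsplit : s = Set.Ioc a η ∪ Set.Ioc η b := (Set.Ioc_union_Ioc_eq_Ioc hη.1.le hη.2).symm
        have hint2 : IntegrableOn (fun ξ => f ξ η) (Set.Ioc η b) volume := by
          apply Measure.integrableOn_of_bounded (M := CF * (CR * C))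
          · simp [Real.volume_Ioc]
          · exact (hfm.comp (measurable_id.prodMk measurable_const)).aestronglyMeasurable
          · refine (ae_restrict_iff' measurableSet_Ioc).2 (Filter.Eventually.of_forall ?_)
            intro ξ hξ
            simp only [hfdef]
            split_ifs with h
            · have h1 : b - ξ ∈ Set.Icc (a - b) (b - a) :=
                ⟨by linarith [hη.1, hξ.1, hξ.2], by linarith [hη.1, hξ.1, hξ.2]⟩
              have h2 : ξ - η ∈ Set.Icc (a - b) (b - a) :=
                ⟨by linarith [hξ.1, hξ.2, hη.1, hη.2], by linarith [hξ.1, hξ.2, hη.1, hη.2]⟩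
              calc ‖F' (b - ξ) * (R' (ξ - η) * j η)‖
                  = ‖F' (b - ξ)‖ * (‖R' (ξ - η)‖ * ‖j η‖) := by simp [norm_mul]
                _ ≤ CF * (CR * C) := by
                    gcongr
                    · exact hCF _ h1
                    · exact hCR _ h2
                    · exact hC η
            · simpa using mul_nonneg hCF0 (mul_nonneg hCR0 hC0)
        have hzero : ∫ ξ in Set.Ioc a η, f ξ η = 0 := by
          apply setIntegral_eq_zero_of_ae_eq_zero
          have hane : ∀ᵐ ξ : ℝ ∂volume, ξ ≠ η := by
            have hsing : {ξ : ℝ | ¬ ξ ≠ η} = {η} := by ext ξ; simp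
            rw [ae_iff, hsing]
            exact measure_singleton η
          filter_upwards [hane] with ξ hne hmem
          have : ¬ η ≤ ξ := fun h => hne (le_antisymm hmem.2 h)
          simp [hfdef, if_neg this]
        have hzint : IntegrableOn (fun ξ => f ξ η) (Set.Ioc a η) volume := by
          apply Measure.integrableOn_of_bounded (M := CF * (CR * C))
          · simp [Real.volume_Ioc]
          · exact (hfm.comp (measurable_id.prodMk measurable_const)).aestronglyMeasurable
          · refine (ae_restrict_iff' measurableSet_Ioc).2 (Filter.Eventually.of_forall ?_)
            intro ξ hξ
            simp only [hfdef]
            split_ifs with h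
            · have hξη : ξ = η := le_antisymm hξ.2 h
              subst hξη
              have h1 : b - ξ ∈ Set.Icc (a - b) (b - a) :=
                ⟨by linarith [hη.1, hη.2], by linarith [hη.1, hη.2]⟩
              have h2 : (0:ℝ) ∈ Set.Icc (a - b) (b - a) := h0mem
              calc ‖F' (b - ξ) * (R' (ξ - ξ) * j ξ)‖
                  = ‖F' (b - ξ)‖ * (‖R' (ξ - ξ)‖ * ‖j ξ‖) := by simp [norm_mul]
                _ ≤ CF * (CR * C) := by
                    gcongr
                    · exact hCF _ h1
                    · exact sub_self ξ ▸ hCR _ h2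
                    · exact hC ξ
            · simpa using mul_nonneg hCF0 (mul_nonneg hCR0 hC0)
        rw [hsplit, setIntegral_union (Set.Ioc_disjoint_Ioc_of_le le_rfl) measurableSet_Ioc hzint hint2,
          hzero, zero_add]
        have hfpos : ∫ ξ in Set.Ioc η b, f ξ η
            = ∫ ξ in Set.Ioc η b, F' (b - ξ) * R' (ξ - η) * j η := by
          apply setIntegral_congr_fun measurableSet_Ioc
          intro ξ hξ
          simp only [hfdef, if_pos hξ.1.le]
          ring
        rw [hfpos, ← intervalIntegral.integral_of_le hη.2]
        rw [intervalIntegral.integral_mul_const]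
        have hsub : (∫ ξ in η..b, F' (b - ξ) * R' (ξ - η))
            = ∫ u in (0:ℝ)..(b - η), F' ((b - η) - u) * R' u := by
          have := intervalIntegral.integral_comp_sub_right
            (fun u => F' ((b - η) - u) * R' u) η (a := η) (b := b)
          rw [sub_self] at this
          rw [← this]
          apply intervalIntegral.integral_congr
          intro ξ hξ
          congr 2
          ring
        have hbη : (0:ℝ) ≤ b - η := by linarith [hη.2]
        have hres' : (∫ u in (0:ℝ)..(b - η), F' ((b - η) - u) * R' u)
            = R (b - η) - F (b - η) := by
          have heq : (∫ u in (0:ℝ)..(b - η), F' ((b - η) - u) * R' u)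
              = ∫ u in (0:ℝ)..(b - η), F ((b - η) - u) * R u := by
            apply intervalIntegral.integral_congr
            intro u hu
            rw [Set.uIcc_of_le hbη] at hu
            show F' ((b - η) - u) * R' u = F ((b - η) - u) * R u
            rw [hF'eq _ (by linarith [hu.1, hu.2]), hR'eq _ hu.1]
          rw [heq]
          have := hres (b - η) hbη
          linarith
        rw [hsub, hres', hR'eq _ hbη, hF'eq _ hbη]
        ring
    _ = ∫ ξ in s, (j ξ * F' (b - ξ) + j ξ * (R' (b - ξ) - F' (b - ξ))) := by
        rw [← MeasureTheory.integral_add]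
        · apply Measure.integrableOn_of_bounded (M := C * CF) hsfin
          · exact (hj_meas.mul
              (hF'c.measurable.comp (measurable_const.sub measurable_id))).aestronglyMeasurable
          · refine (ae_restrict_iff' measurableSet_Ioc).2 (Filter.Eventually.of_forall ?_)
            intro ξ hξ
            have h1 : b - ξ ∈ Set.Icc (a - b) (b - a) :=
              ⟨by linarith [hξ.1, hξ.2], by linarith [hξ.1, hξ.2]⟩
            calc ‖j ξ * F' (b - ξ)‖ = ‖j ξ‖ * ‖F' (b - ξ)‖ := norm_mul _ _
              _ ≤ C * CF := by
                  gcongr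
                  · exact hC ξ
                  · exact hCF _ h1
        · apply Measure.integrableOn_of_bounded (M := C * (CR + CF)) hsfin
          · exact (hj_meas.mul
              ((hR'c.measurable.comp (measurable_const.sub measurable_id)).sub
                (hF'c.measurable.comp (measurable_const.sub measurable_id)))).aestronglyMeasurable
          · refine (ae_restrict_iff' measurableSet_Ioc).2 (Filter.Eventually.of_forall ?_)
            intro ξ hξ
            have h1 : b - ξ ∈ Set.Icc (a - b) (b - a) :=
              ⟨by linarith [hξ.1, hξ.2], by linarith [hξ.1, hξ.2]⟩
            calc ‖j ξ * (R' (b - ξ) - F' (b - ξ))‖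
                = ‖j ξ‖ * ‖R' (b - ξ) - F' (b - ξ)‖ := norm_mul _ _
              _ ≤ C * (CR + CF) := by
                  apply mul_le_mul (hC ξ) ?_ (norm_nonneg _) hC0
                  exact (norm_sub_le _ _).trans (add_le_add (hCR _ h1) (hCF _ h1))
    _ = ∫ ξ in s, R (b - ξ) * j ξ := by
        apply setIntegral_congr_fun measurableSet_Ioc
        intro ξ hξ
        show j ξ * F' (b - ξ) + j ξ * (R' (b - ξ) - F' (b - ξ)) = R (b - ξ) * j ξ
        rw [hR'eq _ (by linarith [hξ.1, hξ.2] : (0:ℝ) ≤ b - ξ)]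
        ring
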